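/- Let ρ = |0⟩⟨0|_A ⊗ (1/2^b) I_B on a+b qubits, and partition the qubits into C and D with |D| = d > a. For any unitary U, if the register C of U ρ U† is measured in the computational basis, the probability that the post-measurement state on D equals a fixed pure state |ψ⟩⟨ψ|_D is at most 2^{a-d}. -/

import Mathlib

open Matrix BigOperators Kronecker
open scoped Classical ComplexOrder

noncomputable section

def ptraceFst {C D : Type*} [Fintype C] (σ : Matrix (C × D) (C × D) ℂ) :
    Matrix D D ℂ := Matrix.of fun y y' => ∑ j : C, σ (j, y) (j, y')

def ptraceSnd {C D : Type*} [Fintype D] (σ : Matrix (C × D) (C × D) ℂ) :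
    Matrix C C ℂ := Matrix.of fun x x' => ∑ j : D, σ (x, j) (x', j)

def traceNorm {n : Type*} [Fintype n] [DecidableEq n] (M : Matrix n n ℂ) : ℝ :=
  ((Matrix.posSemidef_conjTranspose_mul_self M).1.eigenvectorUnitary.1 *
    Matrix.diagonal (((↑) : ℝ → ℂ) ∘ (fun x : ℝ => √x) ∘ (Matrix.posSemidef_conjTranspose_mul_self M).1.eigenvalues) *
    (star (Matrix.posSemidef_conjTranspose_mul_self M).1.eigenvectorUnitary : Matrix n n ℂ)).trace.re

def traceDist {n : Type*} [Fintype n] [DecidableEq n] (σ σ' : Matrix n n ℂ) : ℝ :=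
  traceNorm (σ - σ') / 2

def IsDensity {n : Type*} [Fintype n] (M : Matrix n n ℂ) : Prop :=
  M.PosSemidef ∧ M.trace = 1

def IsPure {n : Type*} [Fintype n] (σ : Matrix n n ℂ) : Prop :=
  ∃ ψ : n → ℂ, (∑ i, Complex.normSq (ψ i)) = 1 ∧ σ = Matrix.vecMulVec ψ (star ψ)

def inputState (a b : ℕ) :
    Matrix (Fin (2^a) × Fin (2^b)) (Fin (2^a) × Fin (2^b)) ℂ :=
  (Matrix.single 0 0 1) ⊗ₖ (((2:ℂ)^b)⁻¹ • (1 : Matrix (Fin (2^b)) (Fin (2^b)) ℂ))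

def measSub {C D : Type*} [Fintype C] [Fintype D] (σ : Matrix (C × D) (C × D) ℂ) (j : C) :
    Matrix D D ℂ := Matrix.of fun y y' => σ (j, y) (j, y')

def measProb {C D : Type*} [Fintype C] [Fintype D] (σ : Matrix (C × D) (C × D) ℂ) (j : C) : ℝ :=
  ((measSub σ j).trace).re

def gibbs {n : Type*} [Fintype n] [DecidableEq n] (β : ℝ) {H : Matrix n n ℂ}
    (hH : H.IsHermitian) : Matrix n n ℂ :=
  ((hH.cfc (fun x => Real.exp (-β * x))).trace)⁻¹ • hH.cfc (fun x => Real.exp (-β * x))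

def vNEntropy {n : Type*} [Fintype n] [DecidableEq n] (M : Matrix n n ℂ) : ℝ :=
  if h : M.IsHermitian then -∑ i, (h.eigenvalues i) * Real.logb 2 (h.eigenvalues i) else 0

def iterState (n : ℕ) (U : ℕ → Matrix (Fin 2 × Fin (2^n)) (Fin 2 × Fin (2^n)) ℂ) :
    ℕ → Matrix (Fin (2^n)) (Fin (2^n)) ℂ
  | 0 => ((2:ℂ)^n)⁻¹ • 1
  | k+1 => ptraceFst (U k * ((Matrix.single 0 0 1) ⊗ₖ iterState n U k) * (U k)ᴴ)

namespace Stmt3Aux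

lemma inputState_apply (a b : ℕ) (p q : Fin (2^a) × Fin (2^b)) :
    inputState a b p q
      = (if p.1 = 0 ∧ q.1 = 0 ∧ p.2 = q.2 then ((2:ℂ)^b)⁻¹ else 0) := by
  obtain ⟨x, y⟩ := p; obtain ⟨x', y'⟩ := q
  simp only [inputState, kroneckerMap_apply, Matrix.single, Matrix.smul_apply,
    Matrix.one_apply, Matrix.of_apply, smul_eq_mul]
  by_cases h1 : x = 0 <;> by_cases h2 : x' = 0 <;> by_cases h3 : y = y' <;>
    simp [h1, h2, h3, eq_comm]

lemma mulVec_inputState (a b : ℕ) (v : Fin (2^a) × Fin (2^b) → ℂ)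
    (x : Fin (2^a)) (y : Fin (2^b)) :
    (inputState a b *ᵥ v) (x, y) = if x = 0 then ((2:ℂ)^b)⁻¹ * v (0, y) else 0 := by
  simp only [mulVec, dotProduct, Fintype.sum_prod_type, inputState_apply, ite_and, ite_mul,
    zero_mul]
  by_cases hx : x = 0
  · simp [hx, Finset.sum_ite_eq', Finset.sum_ite_eq, mul_comm]
  · simp [hx]

lemma quad_inputState (a b : ℕ) (v : Fin (2^a) × Fin (2^b) → ℂ) :
    star v ⬝ᵥ (inputState a b *ᵥ v)
      = ((2:ℂ)^b)⁻¹ * ∑ y, (Complex.normSq (v (0, y)) : ℂ) := by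
  rw [dotProduct, Fintype.sum_prod_type, Finset.sum_comm]
  simp only [Pi.star_apply, mulVec_inputState, mul_ite, mul_zero, Finset.sum_ite_eq',
    Finset.mem_univ, if_true, Finset.mul_sum]
  refine Finset.sum_congr rfl fun y _ => ?_
  simp only [Complex.normSq_eq_conj_mul_self, Complex.star_def]
  ring

lemma two_pow_inv_real (b : ℕ) : ((2:ℂ)^b)⁻¹ = ((((2:ℝ)^b)⁻¹ : ℝ) : ℂ) := by
  push_cast; ring

lemma inputState_isHermitian (a b : ℕ) : (inputState a b).IsHermitian := by
  ext ⟨x, y⟩ ⟨x', y'⟩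
  simp only [conjTranspose_apply, inputState_apply]
  by_cases h : x = 0 ∧ x' = 0 ∧ y = y'
  · have h' : x' = 0 ∧ x = 0 ∧ y' = y := ⟨h.2.1, h.1, h.2.2.symm⟩
    rw [if_pos h, if_pos h', two_pow_inv_real]
    simp
  · have h' : ¬(x' = 0 ∧ x = 0 ∧ y' = y) := by tauto
    rw [if_neg h, if_neg h', star_zero]

lemma dot_star_self (n : Type*) [Fintype n] (v : n → ℂ) :
    star v ⬝ᵥ v = ((∑ p, Complex.normSq (v p) : ℝ) : ℂ) := by
  push_cast
  simp [dotProduct, Complex.normSq_eq_conj_mul_self, Complex.star_def]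

lemma inputState_posSemidef (a b : ℕ) : (inputState a b).PosSemidef := by
  refine .of_dotProduct_mulVec_nonneg (inputState_isHermitian a b) fun v => ?_
  rw [quad_inputState, two_pow_inv_real]
  rw [show (∑ y, (Complex.normSq (v (0, y)) : ℂ))
      = ((∑ y, Complex.normSq (v (0, y)) : ℝ) : ℂ) by push_cast; ring]
  rw [← Complex.ofReal_mul, Complex.zero_le_real]
  exact mul_nonneg (by positivity) (Finset.sum_nonneg fun y _ => Complex.normSq_nonneg _)

lemma smulone_isHermitian (a b : ℕ) :
    (((2:ℂ)^b)⁻¹ • (1 : Matrix (Fin (2^a) × Fin (2^b)) (Fin (2^a) × Fin (2^b)) ℂ)).IsHermitian := by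
  rw [IsHermitian, conjTranspose_smul, conjTranspose_one, two_pow_inv_real]
  simp

lemma sub_posSemidef (a b : ℕ) :
    (((2:ℂ)^b)⁻¹ • (1 : Matrix (Fin (2^a) × Fin (2^b)) (Fin (2^a) × Fin (2^b)) ℂ)
      - inputState a b).PosSemidef := by
  refine .of_dotProduct_mulVec_nonneg ((smulone_isHermitian a b).sub (inputState_isHermitian a b)) fun v => ?_
  rw [sub_mulVec, dotProduct_sub, smul_mulVec, one_mulVec, dotProduct_smul,
    quad_inputState, dot_star_self, two_pow_inv_real]
  rw [show (∑ y, (Complex.normSq (v (0, y)) : ℂ))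
      = ((∑ y, Complex.normSq (v (0, y)) : ℝ) : ℂ) by push_cast; ring]
  rw [smul_eq_mul, ← Complex.ofReal_mul, ← Complex.ofReal_mul, ← Complex.ofReal_sub,
    Complex.zero_le_real, ← mul_sub]
  refine mul_nonneg (by positivity) (sub_nonneg.2 ?_)
  rw [Fintype.sum_prod_type]
  exact Finset.single_le_sum (f := fun x => ∑ y, Complex.normSq (v (x, y)))
    (fun x _ => Finset.sum_nonneg fun y _ => Complex.normSq_nonneg _) (Finset.mem_univ 0)

def chi {C D : Type*} [DecidableEq C] (j : C) (ψ : D → ℂ) : C × D → ℂ :=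
  fun p => if p.1 = j then ψ p.2 else 0

lemma dot_chi {C D : Type*} [Fintype C] [Fintype D] [DecidableEq C]
    (M : Matrix (C × D) (C × D) ℂ) (j : C) (ψ : D → ℂ) :
    star (chi j ψ) ⬝ᵥ (M *ᵥ chi j ψ)
      = ∑ y : D, ∑ y' : D, (starRingEnd ℂ) (ψ y) * (M (j, y) (j, y') * ψ y') := by
  simp only [dotProduct, mulVec, chi, Fintype.sum_prod_type, Pi.star_apply,
    apply_ite (star : ℂ → ℂ), star_zero, mul_ite, mul_zero, ite_mul, zero_mul,
    Finset.sum_ite_irrel, Finset.sum_const_zero, Finset.sum_ite_eq', Finset.mem_univ, if_true]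
  refine Finset.sum_congr rfl fun y _ => ?_
  rw [Finset.mul_sum]
  refine Finset.sum_congr rfl fun y' _ => ?_
  simp [Complex.star_def, dotProduct, Fintype.sum_prod_type, mul_comm]

lemma chi_norm {C D : Type*} [Fintype C] [Fintype D] [DecidableEq C] (j : C) (ψ : D → ℂ) :
    ∑ p, Complex.normSq (chi j ψ p) = ∑ y, Complex.normSq (ψ y) := by
  simp only [chi, Fintype.sum_prod_type, apply_ite Complex.normSq, Complex.normSq_zero,
    Finset.sum_ite_irrel, Finset.sum_const_zero, Finset.sum_ite_eq', Finset.mem_univ, if_true]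

end Stmt3Aux

theorem stmt3 (a b c d : ℕ) (hn : a + b = c + d) (hd : a < d)
    (e : (Fin (2^a) × Fin (2^b)) ≃ (Fin (2^c) × Fin (2^d)))
    (U : Matrix (Fin (2^c) × Fin (2^d)) (Fin (2^c) × Fin (2^d)) ℂ)
    (hU : U ∈ Matrix.unitaryGroup (Fin (2^c) × Fin (2^d)) ℂ)
    (ψ : Fin (2^d) → ℂ) (hψ : (∑ i, Complex.normSq (ψ i)) = 1) :
    (∑ j : Fin (2^c),
        if measSub (U * (Matrix.reindex e e (inputState a b)) * Uᴴ) j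
            = (measProb (U * (Matrix.reindex e e (inputState a b)) * Uᴴ) j : ℂ)
                • Matrix.vecMulVec ψ (star ψ)
          then measProb (U * (Matrix.reindex e e (inputState a b)) * Uᴴ) j else 0)
      ≤ (2:ℝ)^(a:ℤ) / (2:ℝ)^(d:ℤ) := by
  set σ : Matrix (Fin (2^c) × Fin (2^d)) (Fin (2^c) × Fin (2^d)) ℂ :=
    U * (Matrix.reindex e e (inputState a b)) * Uᴴ with hσdef
  have hρ : (Matrix.reindex e e (inputState a b)).PosSemidef := by
    rw [Matrix.reindex_apply]
    exact (Stmt3Aux.inputState_posSemidef a b).submatrix _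
  have hσpsd : σ.PosSemidef := hρ.mul_mul_conjTranspose_same U
  have hUU : U * Uᴴ = 1 := by
    have := Matrix.mem_unitaryGroup_iff.mp hU
    simpa [Matrix.star_eq_conjTranspose] using this
  have hsubpsd : (((2:ℂ)^b)⁻¹ • (1 : Matrix (Fin (2^c) × Fin (2^d)) (Fin (2^c) × Fin (2^d)) ℂ)
      - σ).PosSemidef := by
    have h1 : (Matrix.reindex e e
        (((2:ℂ)^b)⁻¹ • (1 : Matrix (Fin (2^a) × Fin (2^b)) (Fin (2^a) × Fin (2^b)) ℂ)
          - inputState a b)).PosSemidef := by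
      rw [Matrix.reindex_apply]
      exact (Stmt3Aux.sub_posSemidef a b).submatrix _
    have h2 := h1.mul_mul_conjTranspose_same U
    have h3 : U * (Matrix.reindex e e
        (((2:ℂ)^b)⁻¹ • (1 : Matrix (Fin (2^a) × Fin (2^b)) (Fin (2^a) × Fin (2^b)) ℂ)
          - inputState a b)) * Uᴴ
        = ((2:ℂ)^b)⁻¹ • 1 - σ := by
      have h4 : (Matrix.reindex e e
          (((2:ℂ)^b)⁻¹ • (1 : Matrix (Fin (2^a) × Fin (2^b)) (Fin (2^a) × Fin (2^b)) ℂ)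
            - inputState a b))
          = ((2:ℂ)^b)⁻¹ • 1 - Matrix.reindex e e (inputState a b) := by
        ext p q
        simp [Matrix.reindex_apply, Matrix.submatrix_apply, Matrix.one_apply,
          Matrix.sub_apply, Matrix.smul_apply, Equiv.symm_apply_eq]
      rw [h4, Matrix.mul_sub, Matrix.sub_mul, hσdef]
      congr 1
      rw [Matrix.mul_smul, Matrix.mul_one, Matrix.smul_mul, hUU]
    rwa [h3] at h2
  have hψC : (∑ y, (starRingEnd ℂ) (ψ y) * ψ y) = 1 := by
    have h := congrArg (fun r : ℝ => (r : ℂ)) hψ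
    push_cast at h
    simpa [Complex.normSq_eq_conj_mul_self] using h
  have key : ∀ j : Fin (2^c),
      (if measSub σ j = ((measProb σ j : ℝ) : ℂ) • Matrix.vecMulVec ψ (star ψ)
        then measProb σ j else 0) ≤ (star (Stmt3Aux.chi j ψ) ⬝ᵥ (σ *ᵥ Stmt3Aux.chi j ψ)).re := by
    intro j
    have h0 : (0:ℝ) ≤ (star (Stmt3Aux.chi j ψ) ⬝ᵥ (σ *ᵥ Stmt3Aux.chi j ψ)).re := by
      have h0' := hσpsd.dotProduct_mulVec_nonneg (Stmt3Aux.chi j ψ)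
      rw [Complex.le_def] at h0'
      simpa using h0'.1
    split_ifs with h
    · have hentry : ∀ y y', σ (j, y) (j, y')
          = ((measProb σ j : ℝ) : ℂ) * (ψ y * (starRingEnd ℂ) (ψ y')) := by
        intro y y'
        have h5 := congrFun (congrFun h y) y'
        simpa [measSub, Matrix.vecMulVec_apply, Matrix.smul_apply, smul_eq_mul,
          Pi.star_apply, Complex.star_def] using h5
      have hq : star (Stmt3Aux.chi j ψ) ⬝ᵥ (σ *ᵥ Stmt3Aux.chi j ψ)
          = ((measProb σ j : ℝ) : ℂ) := by
        rw [Stmt3Aux.dot_chi]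
        calc ∑ y, ∑ y', (starRingEnd ℂ) (ψ y) * (σ (j, y) (j, y') * ψ y')
            = ∑ y, ∑ y', ((measProb σ j : ℝ) : ℂ) *
                (((starRingEnd ℂ) (ψ y) * ψ y) * ((starRingEnd ℂ) (ψ y') * ψ y')) := by
              refine Finset.sum_congr rfl fun y _ => Finset.sum_congr rfl fun y' _ => ?_
              rw [hentry]; ring
          _ = ((measProb σ j : ℝ) : ℂ) * ((∑ y, (starRingEnd ℂ) (ψ y) * ψ y)
                * (∑ y', (starRingEnd ℂ) (ψ y') * ψ y')) := by
              rw [Finset.sum_mul_sum, Finset.mul_sum]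
              refine Finset.sum_congr rfl fun y _ => ?_
              rw [Finset.mul_sum]
          _ = ((measProb σ j : ℝ) : ℂ) := by rw [hψC]; ring
      rw [hq, Complex.ofReal_re]
    · exact h0
  have hub : ∀ j : Fin (2^c),
      (star (Stmt3Aux.chi j ψ) ⬝ᵥ (σ *ᵥ Stmt3Aux.chi j ψ)).re ≤ ((2:ℝ)^b)⁻¹ := by
    intro j
    have h1 := hsubpsd.dotProduct_mulVec_nonneg (Stmt3Aux.chi j ψ)
    rw [Matrix.sub_mulVec, dotProduct_sub, Matrix.smul_mulVec, Matrix.one_mulVec,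
      dotProduct_smul, Stmt3Aux.dot_star_self, Stmt3Aux.chi_norm, hψ,
      Complex.le_def] at h1
    have h2 := h1.1
    simp only [Stmt3Aux.two_pow_inv_real, Complex.zero_re, Complex.sub_re, smul_eq_mul,
      Complex.ofReal_one, mul_one, Complex.ofReal_re] at h2
    linarith
  calc (∑ j : Fin (2^c),
        if measSub σ j = ((measProb σ j : ℝ) : ℂ) • Matrix.vecMulVec ψ (star ψ)
          then measProb σ j else 0)
      ≤ ∑ j : Fin (2^c), (star (Stmt3Aux.chi j ψ) ⬝ᵥ (σ *ᵥ Stmt3Aux.chi j ψ)).re :=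
        Finset.sum_le_sum fun j _ => key j
    _ ≤ ∑ _j : Fin (2^c), ((2:ℝ)^b)⁻¹ := Finset.sum_le_sum fun j _ => hub j
    _ = (2:ℝ)^c * ((2:ℝ)^b)⁻¹ := by
        rw [Finset.sum_const, Finset.card_univ, Fintype.card_fin, nsmul_eq_mul]
        push_cast; ring
    _ ≤ (2:ℝ)^(a:ℤ) / (2:ℝ)^(d:ℤ) := by
        rw [zpow_natCast, zpow_natCast]
        apply le_of_eq
        have hcd : (2:ℝ)^c * (2:ℝ)^d = (2:ℝ)^a * (2:ℝ)^b := by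
          rw [← pow_add, ← pow_add, hn]
        have h2b : (2:ℝ)^b ≠ 0 := by positivity
        have h2d : (2:ℝ)^d ≠ 0 := by positivity
        field_simp
        linear_combination hcd


end
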